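/- For positive integers i < j ≤ r with r the number of vertices of a component F_1 of a tiered forest (vertices x_1 < ... < x_r), the edge x_i x_j belongs to E(CT(F)) \ E(F_1) if and only if x_{r+1−i} x_{r+1−j} belongs to E(CT(F')) \ E(F'_1), where F'_1 is the dual of F_1. -/

import Mathlib

open Finset

attribute [local instance 10] Classical.propDecidable

noncomputable section

/-- An edge of a simple graph on `ℕ`, stored as an ordered pair `(u,v)` with `u < v` intended. -/
abbrev PEdge : Type := ℕ × ℕ

/-- A labelled edge (for multigraphs): an endpoint pair together with a label. -/
abbrev LEdge : Type := (ℕ × ℕ) × ℕ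

def adjP (E : Finset PEdge) (u v : ℕ) : Prop := (u, v) ∈ E ∨ (v, u) ∈ E

def reachP (E : Finset PEdge) : ℕ → ℕ → Prop := Relation.ReflTransGen (adjP E)

def connP (V : Finset ℕ) (E : Finset PEdge) : Prop :=
  (∀ e ∈ E, e.1 ∈ V ∧ e.2 ∈ V) ∧ ∀ u ∈ V, ∀ v ∈ V, reachP E u v

def IsTreeOn (V : Finset ℕ) (E : Finset PEdge) : Prop := connP V E ∧ E.card + 1 = V.card

/-- A graph on a finite set of naturals together with a tiering map. -/
structure PreGraph where
  V : Finset ℕ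
  E : Finset PEdge
  t : ℕ → ℕ

/-- `G` is a tiered graph with two tiers. -/
def IsTiered (G : PreGraph) : Prop :=
  (∀ v ∈ G.V, 0 < v) ∧
  (∀ e ∈ G.E, e.1 ∈ G.V ∧ e.2 ∈ G.V ∧ e.1 < e.2) ∧
  (∀ v ∈ G.V, G.t v = 1 ∨ G.t v = 2) ∧
  (∀ e ∈ G.E, G.t e.1 < G.t e.2)

/-- acyclicity: every edge is a bridge. -/
def IsForest (G : PreGraph) : Prop := ∀ e ∈ G.E, ¬ reachP (G.E.erase e) e.1 e.2

def IsTreeG (G : PreGraph) : Prop := IsTreeOn G.V G.E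

/-- the connected component (vertex set) of `x`. -/
def comp (V : Finset ℕ) (E : Finset PEdge) (x : ℕ) : Finset ℕ :=
  V.filter fun y => reachP E x y

/-- the order-reversing involution `x_i ↦ x_{s+1-i}` of a finite set `V = {x_1 < ... < x_s}`. -/
def flipMap (V : Finset ℕ) (x : ℕ) : ℕ :=
  if hx : x ∈ V then
    ((V.orderIsoOfFin rfl)
      ⟨V.card - 1 - ((V.orderIsoOfFin rfl).symm ⟨x, hx⟩).1, by
        have h := ((V.orderIsoOfFin rfl).symm ⟨x, hx⟩).isLt; omega⟩).1
  else x

/-- the dual of a (connected) tiered graph, via the global vertex ordering. -/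
def dual (G : PreGraph) : PreGraph where
  V := G.V
  E := G.E.image fun e => (flipMap G.V e.2, flipMap G.V e.1)
  t := fun x => if x ∈ G.V then 3 - G.t (flipMap G.V x) else G.t x

/-- the componentwise dual of a (possibly disconnected) tiered graph. -/
def cdual (G : PreGraph) : PreGraph where
  V := G.V
  E := G.E.image fun e => (flipMap (comp G.V G.E e.1) e.2, flipMap (comp G.V G.E e.1) e.1)
  t := fun x => if x ∈ G.V then 3 - G.t (flipMap (comp G.V G.E x) x) else G.t x

/-- the recursive weight of a tiered tree (fuel-based implementation; the recursion
depth is bounded by the number of vertices). -/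
def weightAux : ℕ → PreGraph → ℕ
  | 0, _ => 0
  | fuel + 1, T =>
    if h : 2 ≤ T.V.card then
      let v := T.V.min' (Finset.card_pos.mp (by omega))
      let V' := T.V.erase v
      let E' := T.E.filter fun e => e.1 ≠ v ∧ e.2 ≠ v
      ∑ u ∈ V'.filter (fun u => adjP T.E v u),
        (((comp V' E' u).filter fun y => y < u ∧ T.t v < T.t y).card
          + weightAux fuel ⟨comp V' E' u, E'.filter fun e => e.1 ∈ comp V' E' u, T.t⟩)
    else 0

def weight (T : PreGraph) : ℕ := weightAux T.V.card T

/-- edges of a complete tiered graph with tier 1 vertex set `A` and tier 2 vertex set `B`. -/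
def ctE2 (A B : Finset ℕ) : Finset PEdge := (A ×ˢ B).filter fun e => e.1 < e.2

/-- the edge set of the complete tiered graph determined by a two-tier tiered graph `G`. -/
def ctE (G : PreGraph) : Finset PEdge :=
  ctE2 (G.V.filter fun v => G.t v = 1) (G.V.filter fun v => G.t v = 2)

/-- edge set of the complete tiered graph on `[n]` determined by a tiering map `t`. -/
def ctEM (n : ℕ) (t : ℕ → ℕ) : Finset PEdge :=
  (Finset.Icc 1 n ×ˢ Finset.Icc 1 n).filter fun e => e.1 < e.2 ∧ t e.1 < t e.2

def extActiveP (T : Finset PEdge) (ω : PEdge → ℝ) (e : PEdge) : Prop :=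
  e ∉ T ∧ reachP T e.1 e.2 ∧ ∀ e' ∈ T, ¬ reachP (T.erase e') e.1 e.2 → ω e < ω e'

/-- external activity of the spanning forest `T` in the graph with edge set `E`. -/
def eaP (E T : Finset PEdge) (ω : PEdge → ℝ) : ℕ := (E.filter (extActiveP T ω)).card

def adjL (E : Finset LEdge) (u v : ℕ) : Prop := ∃ e ∈ E, e.1 = (u, v) ∨ e.1 = (v, u)
def reachL (E : Finset LEdge) : ℕ → ℕ → Prop := Relation.ReflTransGen (adjL E)
def connL (V : Finset ℕ) (E : Finset LEdge) : Prop := ∀ u ∈ V, ∀ v ∈ V, reachL E u v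
def IsLTree (V : Finset ℕ) (T : Finset LEdge) : Prop := connL V T ∧ T.card + 1 = V.card

def extActiveL (T : Finset LEdge) (ω : LEdge → ℝ) (e : LEdge) : Prop :=
  e ∉ T ∧ reachL T e.1.1 e.1.2 ∧ ∀ e' ∈ T, ¬ reachL (T.erase e') e.1.1 e.1.2 → ω e < ω e'

def eaL (E T : Finset LEdge) (ω : LEdge → ℝ) : ℕ := (E.filter (extActiveL T ω)).card

def omega1 (N : ℕ) (e : PEdge) : ℝ := (e.1 : ℝ) + (e.2 : ℝ) / (N : ℝ)
def omega2 (N : ℕ) (e : PEdge) : ℝ := ((N + 1 - e.2 : ℕ) : ℝ) + ((N + 1 - e.1 : ℕ) : ℝ) / (N : ℝ)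
def omegaLex (n : ℕ) (e : PEdge) : ℝ := ((e.1 * (n + 1) + e.2 : ℕ) : ℝ)

/-- representative (minimum) of the component of `x` in the forest `F` on vertex set `V`. -/
def rep (V : Finset ℕ) (F : Finset LEdge) (x : ℕ) : ℕ :=
  if hx : x ∈ V then
    (V.filter fun y => reachL F x y).min'
      ⟨x, Finset.mem_filter.mpr ⟨hx, Relation.ReflTransGen.refl⟩⟩
  else x

/-- image of an edge in the quotient graph `G • F`; the label encodes the original edge. -/
def quotEdge (ρ : ℕ → ℕ) (e : LEdge) : LEdge :=
  ((ρ e.1.1, ρ e.1.2), Nat.pair (Nat.pair e.1.1 e.1.2) e.2)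

/-- recover the original edge from a quotient edge. -/
def decodeE (e : LEdge) : LEdge :=
  (((Nat.unpair (Nat.unpair e.2).1).1, (Nat.unpair (Nat.unpair e.2).1).2), (Nat.unpair e.2).2)

/-- tiering map on `[n]` induced by `f : Fin n → Fin m` (tiers `1,...,m`). -/
def tf (n m : ℕ) (f : Fin n → Fin m) : ℕ → ℕ := fun v =>
  if h : v ∈ Finset.Icc 1 n then
    (f ⟨v - 1, by have := Finset.mem_Icc.mp h; omega⟩).1 + 1
  else 0

/-- `G` is a tiered graph with `m` tiers. -/
def IsTieredM (m : ℕ) (G : PreGraph) : Prop :=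
  (∀ e ∈ G.E, e.1 ∈ G.V ∧ e.2 ∈ G.V ∧ e.1 < e.2) ∧
  (∀ v ∈ G.V, G.t v ∈ Finset.Icc 1 m) ∧
  (∀ e ∈ G.E, G.t e.1 < G.t e.2) ∧
  (∀ i ∈ Finset.Icc 1 m, ∃ v ∈ G.V, G.t v = i)

/-- weight polynomial `P_p(q)` (recursive weight), evaluated at `q`. -/
def Pw (n m : ℕ) (p : ℕ → ℕ) (q : ℤ) : ℤ :=
  ∑ f : Fin n → Fin m,
    ∑ E ∈ ((Finset.Icc 1 n ×ˢ Finset.Icc 1 n).powerset.filter fun E =>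
        IsTreeG ⟨Finset.Icc 1 n, E, tf n m f⟩ ∧ IsTieredM m ⟨Finset.Icc 1 n, E, tf n m f⟩ ∧
        ∀ i ∈ Finset.Icc 1 m, ((Finset.Icc 1 n).filter fun v => tf n m f v = i).card = p i),
      q ^ weight ⟨Finset.Icc 1 n, E, tf n m f⟩

/-- weight polynomial `P_p(q)` with the weight of a tiered tree given by its external
activity in the complete tiered graph it determines (lexicographic edge order). -/
def PwEA (n m : ℕ) (p : ℕ → ℕ) (q : ℤ) : ℤ :=
  ∑ f : Fin n → Fin m,
    ∑ E ∈ ((Finset.Icc 1 n ×ˢ Finset.Icc 1 n).powerset.filter fun E =>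
        IsTreeG ⟨Finset.Icc 1 n, E, tf n m f⟩ ∧ IsTieredM m ⟨Finset.Icc 1 n, E, tf n m f⟩ ∧
        ∀ i ∈ Finset.Icc 1 m, ((Finset.Icc 1 n).filter fun v => tf n m f v = i).card = p i),
      q ^ eaP (ctEM n (tf n m f)) E (omegaLex n)

/-- `T^c_G(y)`: the Tutte evaluation `T_G(1,y)` (spanning tree expansion) for a connected
graph, `0` otherwise. -/
def TcP (V : Finset ℕ) (E : Finset PEdge) (ω : PEdge → ℝ) (y : ℤ) : ℤ :=
  if connP V E then ∑ T ∈ E.powerset.filter (fun T => IsTreeOn V T), y ^ eaP E T ω else 0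

/-- edge multiset of `H ∪ Q_S`: `H`-edges (labels `≠ 0`) together with the complete
tiered graph on `U` with tier-1 set `S` (labelled `0`). -/
def qE (U : Finset ℕ) (EH : Finset LEdge) (S : Finset ℕ) : Finset LEdge :=
  EH ∪ (ctE2 S (U \ S)).image fun p => (p, 0)

/-- `(S,T) ↦ (S*, T*)`: the dual quasi-tiered tree. -/
def dualTree (U : Finset ℕ) (ST : Finset ℕ × Finset LEdge) : Finset ℕ × Finset LEdge :=
  (U.filter fun v =>
      (cdual ⟨U, (ST.2.filter fun e => e.2 = 0).image Prod.fst,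
        fun w => if w ∈ ST.1 then 1 else 2⟩).t v = 1,
   (ST.2.filter fun e => e.2 ≠ 0) ∪
     (cdual ⟨U, (ST.2.filter fun e => e.2 = 0).image Prod.fst,
        fun w => if w ∈ ST.1 then 1 else 2⟩).E.image fun p => (p, 0))

/-- tiered forests on `U` with tier sizes `(p1, p2)` (tier map normalised off `U`). -/
def ForestSet (U : Finset ℕ) (p1 p2 : ℕ) : Set PreGraph :=
  {F | F.V = U ∧ IsTiered F ∧ IsForest F ∧
    (U.filter fun v => F.t v = 1).card = p1 ∧
    (U.filter fun v => F.t v = 2).card = p2 ∧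
    ∀ v, v ∉ U → F.t v = 0}

lemma adjP_symm (E : Finset PEdge) : Symmetric (adjP E) := fun _ _ h => h.symm

lemma reachP_symm (E : Finset PEdge) {a b : ℕ} (h : reachP E a b) : reachP E b a :=
  by
    induction h with
    | refl => exact Relation.ReflTransGen.refl
    | tail _ hbc ih => exact Relation.ReflTransGen.head (adjP_symm E hbc) ih

lemma comp_eq {V : Finset ℕ} {E : Finset PEdge} {x y : ℕ} (hy : y ∈ comp V E x) :
    comp V E y = comp V E x := by
  have hxy : reachP E x y := (Finset.mem_filter.mp hy).2
  ext z
  simp only [comp, Finset.mem_filter]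
  exact ⟨fun ⟨hz, h⟩ => ⟨hz, hxy.trans h⟩, fun ⟨hz, h⟩ => ⟨hz, (reachP_symm E hxy).trans h⟩⟩

lemma comp_subset (V : Finset ℕ) (E : Finset PEdge) (x : ℕ) : comp V E x ⊆ V :=
  Finset.filter_subset _ _

lemma flipMap_eq {V : Finset ℕ} {x : ℕ} (hx : x ∈ V) :
    flipMap V x = ((V.orderIsoOfFin rfl)
      ⟨V.card - 1 - ((V.orderIsoOfFin rfl).symm ⟨x, hx⟩).1, by
        have h := ((V.orderIsoOfFin rfl).symm ⟨x, hx⟩).isLt; omega⟩).1 := by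
  unfold flipMap; rw [dif_pos hx]

lemma flipMap_mem {V : Finset ℕ} {x : ℕ} (hx : x ∈ V) : flipMap V x ∈ V := by
  rw [flipMap_eq hx]; exact ((V.orderIsoOfFin rfl) _).2

lemma flipMap_spec {V : Finset ℕ} {x : ℕ} (hx : x ∈ V) (i j : Fin V.card)
    (h : (V.orderIsoOfFin rfl) i = ⟨x, hx⟩) (hj : j.1 = V.card - 1 - i.1) :
    flipMap V x = ((V.orderIsoOfFin rfl) j).1 := by
  rw [flipMap_eq hx]
  refine congrArg (fun k => ((V.orderIsoOfFin rfl) k).1) (Fin.ext ?_)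
  rw [hj]
  show V.card - 1 - ((V.orderIsoOfFin rfl).symm ⟨x, hx⟩).1 = V.card - 1 - i.1
  rw [← h, OrderIso.symm_apply_apply]

lemma flipMap_flipMap {V : Finset ℕ} {x : ℕ} (hx : x ∈ V) :
    flipMap V (flipMap V x) = x := by
  set ι := V.orderIsoOfFin rfl with hι
  set i : Fin V.card := ι.symm ⟨x, hx⟩ with hi
  have hlt : i.1 < V.card := i.isLt
  have hj : V.card - 1 - i.1 < V.card := by omega
  set j : Fin V.card := ⟨V.card - 1 - i.1, hj⟩ with hjdef
  have h1 : flipMap V x = (ι j).1 :=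
    flipMap_spec hx i j (by rw [hi, OrderIso.apply_symm_apply]) rfl
  have h2 : flipMap V (flipMap V x) = (ι i).1 := by
    refine flipMap_spec (flipMap_mem hx) j i (Subtype.ext h1.symm) ?_
    show i.1 = V.card - 1 - j.1
    simp only [hjdef]
    omega
  rw [h2, hi, OrderIso.apply_symm_apply]

lemma flipMap_lt {V : Finset ℕ} {x y : ℕ} (hx : x ∈ V) (hy : y ∈ V) (h : x < y) :
    flipMap V y < flipMap V x := by
  set ι := V.orderIsoOfFin rfl with hι
  set i : Fin V.card := ι.symm ⟨x, hx⟩ with hi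
  set k : Fin V.card := ι.symm ⟨y, hy⟩ with hk
  have hik : i < k := ι.symm.lt_iff_lt.mpr (Subtype.mk_lt_mk.mpr h)
  have hik' : i.1 < k.1 := hik
  have hltk : k.1 < V.card := k.isLt
  have hjx : V.card - 1 - i.1 < V.card := by omega
  have hjy : V.card - 1 - k.1 < V.card := by omega
  have h1 : flipMap V x = (ι ⟨V.card - 1 - i.1, hjx⟩).1 :=
    flipMap_spec hx i _ (by rw [hi, OrderIso.apply_symm_apply]) rfl
  have h2 : flipMap V y = (ι ⟨V.card - 1 - k.1, hjy⟩).1 :=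
    flipMap_spec hy k _ (by rw [hk, OrderIso.apply_symm_apply]) rfl
  rw [h1, h2]
  have : (⟨V.card - 1 - k.1, hjy⟩ : Fin V.card) < ⟨V.card - 1 - i.1, hjx⟩ := by
    simp only [Fin.mk_lt_mk]; omega
  exact Subtype.mk_lt_mk.mp (ι.lt_iff_lt.mpr this)

/-- for vertices `u < v` of a component `C` of a tiered forest `F`
(`C` is the component of some `x ∈ V(F)`), the edge `uv` lies in `E(CT(F)) \ E(F₁)`
iff the flipped edge (`x_i ↦ x_{r+1-i}` within `C`) lies in `E(CT(F')) \ E(F'₁)`. -/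
theorem stmt11 (F : PreGraph) (hT : IsTiered F) (hF : IsForest F)
    (x : ℕ) (hx : x ∈ F.V)
    (u v : ℕ) (hu : u ∈ comp F.V F.E x) (hv : v ∈ comp F.V F.E x) (huv : u < v) :
    ((u, v) ∈ ctE F ∧ (u, v) ∉ F.E) ↔
      ((flipMap (comp F.V F.E x) v, flipMap (comp F.V F.E x) u) ∈ ctE (cdual F) ∧
        (flipMap (comp F.V F.E x) v, flipMap (comp F.V F.E x) u) ∉ (cdual F).E) := by
  obtain ⟨hpos, hedges, htiers, hincr⟩ := hT
  set C := comp F.V F.E x with hC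
  have huV : u ∈ F.V := comp_subset _ _ _ hu
  have hvV : v ∈ F.V := comp_subset _ _ _ hv
  have hcu : comp F.V F.E u = C := comp_eq hu
  have hcv : comp F.V F.E v = C := comp_eq hv
  have hφuC : flipMap C u ∈ C := flipMap_mem hu
  have hφvC : flipMap C v ∈ C := flipMap_mem hv
  have hφuV : flipMap C u ∈ F.V := comp_subset _ _ _ hφuC
  have hφvV : flipMap C v ∈ F.V := comp_subset _ _ _ hφvC
  have hcφu : comp F.V F.E (flipMap C u) = C := comp_eq hφuC
  have hcφv : comp F.V F.E (flipMap C v) = C := comp_eq hφvC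
  have hφφu : flipMap C (flipMap C u) = u := flipMap_flipMap hu
  have hφφv : flipMap C (flipMap C v) = v := flipMap_flipMap hv
  have hφlt : flipMap C v < flipMap C u := flipMap_lt hu hv huv
  have htu := htiers u huV
  have htv := htiers v hvV
  -- Claim A : membership in the complete tiered graphs
  have hA : (u, v) ∈ ctE F ↔ (flipMap C v, flipMap C u) ∈ ctE (cdual F) := by
    simp only [ctE, ctE2, Finset.mem_filter, Finset.mem_product]
    simp only [cdual]
    constructor
    · rintro ⟨⟨⟨_, h1⟩, _, h2⟩, _⟩
      refine ⟨⟨⟨hφvV, ?_⟩, hφuV, ?_⟩, hφlt⟩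
      · rw [if_pos hφvV, hcφv, hφφv]; omega
      · rw [if_pos hφuV, hcφu, hφφu]; omega
    · rintro ⟨⟨⟨_, h1⟩, _, h2⟩, _⟩
      rw [if_pos hφvV, hcφv, hφφv] at h1
      rw [if_pos hφuV, hcφu, hφφu] at h2
      exact ⟨⟨⟨huV, by omega⟩, hvV, by omega⟩, huv⟩
  -- Claim B : membership in the edge sets
  have hB : (u, v) ∈ F.E ↔ (flipMap C v, flipMap C u) ∈ (cdual F).E := by
    constructor
    · intro h
      refine Finset.mem_image.mpr ⟨(u, v), h, ?_⟩
      simp only [hcu]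
    · intro h
      obtain ⟨⟨a, b⟩, hab, heq⟩ := Finset.mem_image.mp h
      obtain ⟨haV, hbV, haltb⟩ := hedges _ hab
      have hreach : reachP F.E a b := Relation.ReflTransGen.single (Or.inl hab)
      have haC : a ∈ comp F.V F.E a :=
        Finset.mem_filter.mpr ⟨haV, Relation.ReflTransGen.refl⟩
      have hbC : b ∈ comp F.V F.E a := Finset.mem_filter.mpr ⟨hbV, hreach⟩
      have h1 : flipMap (comp F.V F.E a) b = flipMap C v := congrArg Prod.fst heq
      have h2 : flipMap (comp F.V F.E a) a = flipMap C u := congrArg Prod.snd heq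
      have hmem : flipMap (comp F.V F.E a) b ∈ comp F.V F.E a := flipMap_mem hbC
      rw [h1] at hmem
      have hcomp : comp F.V F.E a = C := (comp_eq hmem).symm.trans hcφv
      rw [hcomp] at haC hbC h1 h2
      have hb : b = v := by
        have := congrArg (flipMap C) h1
        rwa [flipMap_flipMap hbC, hφφv] at this
      have ha : a = u := by
        have := congrArg (flipMap C) h2
        rwa [flipMap_flipMap haC, hφφu] at this
      rw [← ha, ← hb]; exact hab
  constructor
  · rintro ⟨h1, h2⟩
    exact ⟨hA.mp h1, fun h => h2 (hB.mpr h)⟩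
  · rintro ⟨h1, h2⟩
    exact ⟨hA.mpr h1, fun h => h2 (hB.mp h)⟩

end
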